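/- arXiv:2402.14651 — 2 statements merged into one kernel-verified Lean document; each statement's English description precedes it below -/
import Mathlib

section
/- For any classical-state-preserving closed-loop policy, i.e., a sequence of quantum channels γ_t with N_qc ∘ Tr_A ∘ γ_t(ρ) = N_qc(ρ) for all ρ, with state evolution ρ_{t+1} = N(γ_t(ρ_t)) and actions σ_t = γ_t(ρ_t), the occupation operator σ = (1−β)Σ_{t≥0} β^t σ_t satisfies N_qc(Tr_A(σ)) − β N_qc(N(σ)) = (1−β) N_qc(ρ₀). -/
open Matrix
open scoped Kronecker ComplexOrder

noncomputable section

/-- A density operator: positive semidefinite with unit trace. -/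
def IsDensity {n : Type*} [Fintype n] (ρ : Matrix n n ℂ) : Prop :=
  ρ.PosSemidef ∧ ρ.trace = 1

/-- Partial trace over the second tensor factor. -/
def ptraceA {X A : Type*} [Fintype A] (M : Matrix (X × A) (X × A) ℂ) :
    Matrix X X ℂ :=
  Matrix.of fun x y => ∑ a, M (x, a) (y, a)

/-- A quantum channel given by a Kraus representation. -/
structure KrausChannel (d₁ d₂ : Type*) [Fintype d₁] [DecidableEq d₁] [Fintype d₂] where
  ι : Type
  [fin : Fintype ι]
  K : ι → Matrix d₂ d₁ ℂ
  sum_eq_one : ∑ l : ι, (K l)ᴴ * K l = 1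

attribute [instance] KrausChannel.fin

/-- The action of a Kraus channel on operators. -/
def KrausChannel.apply {d₁ d₂ : Type*} [Fintype d₁] [DecidableEq d₁] [Fintype d₂]
    (C : KrausChannel d₁ d₂) (σ : Matrix d₁ d₁ ℂ) : Matrix d₂ d₂ ℂ :=
  ∑ l : C.ι, C.K l * σ * (C.K l)ᴴ

/-- The quantum-to-classical channel. -/
def Nqc {X : Type*} [Fintype X] [DecidableEq X] (M : Matrix X X ℂ) :
    Matrix X X ℂ :=
  Matrix.diagonal fun x => M x x

/-- The state sequence generated by a closed-loop policy `γ` from `ρ0`. -/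
def stateSeqW {X A : Type*} [Fintype X] [DecidableEq X] [Fintype A] [DecidableEq A]
    (N : KrausChannel (X × A) X) (γ : ℕ → KrausChannel X (X × A))
    (ρ0 : Matrix X X ℂ) : ℕ → Matrix X X ℂ
  | 0 => ρ0
  | t + 1 => N.apply ((γ t).apply (stateSeqW N γ ρ0 t))

section Aux

variable {d₁ d₂ : Type*} [Fintype d₁] [DecidableEq d₁] [Fintype d₂]

lemma KrausChannel.apply_posSemidef (C : KrausChannel d₁ d₂) {ρ : Matrix d₁ d₁ ℂ}
    (h : ρ.PosSemidef) : (C.apply ρ).PosSemidef :=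
  Finset.sum_induction _ _ (fun _ _ ha hb => ha.add hb) Matrix.PosSemidef.zero
    (fun l _ => h.mul_mul_conjTranspose_same (C.K l))

lemma KrausChannel.trace_apply (C : KrausChannel d₁ d₂) (ρ : Matrix d₁ d₁ ℂ) :
    (C.apply ρ).trace = ρ.trace := by
  unfold KrausChannel.apply
  rw [trace_sum]
  have h : ∀ l ∈ Finset.univ, (C.K l * ρ * (C.K l)ᴴ).trace = ((C.K l)ᴴ * C.K l * ρ).trace :=
    fun l _ => trace_mul_cycle (C.K l) ρ (C.K l)ᴴ
  rw [Finset.sum_congr rfl h, ← trace_sum, ← Finset.sum_mul, C.sum_eq_one, one_mul]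

lemma KrausChannel.isDensity_apply (C : KrausChannel d₁ d₂) {ρ : Matrix d₁ d₁ ℂ}
    (h : IsDensity ρ) : IsDensity (C.apply ρ) :=
  ⟨C.apply_posSemidef h.1, by rw [C.trace_apply, h.2]⟩

/-- Entry bound for density matrices. -/
lemma IsDensity.entry_norm_le_one {n : Type*} [Fintype n] [DecidableEq n]
    {M : Matrix n n ℂ} (h : IsDensity M) (i j : n) : ‖M i j‖ ≤ 1 := by
  obtain ⟨B, rfl⟩ : ∃ B : Matrix n n ℂ, M = Bᴴ * B := by
    open scoped MatrixOrder in exact CStarAlgebra.nonneg_iff_eq_star_mul_self.mp h.1.nonneg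
  classical
  set v : n → EuclideanSpace ℂ n := fun i => (WithLp.equiv 2 _).symm (fun k => B k i) with hv
  have hinner : ∀ i j, (Bᴴ * B) i j = inner ℂ (v i) (v j) := by
    intro i j
    simp [Matrix.mul_apply, Matrix.conjTranspose_apply, EuclideanSpace.inner_eq_star_dotProduct,
      dotProduct, hv, mul_comm]
  have hdiag : ∀ k, ‖v k‖ ^ 2 = ((Bᴴ * B) k k).re := by
    intro k
    rw [hinner, ← inner_self_eq_norm_sq (𝕜 := ℂ) (v k)]
    rfl
  have hdnn : ∀ k, 0 ≤ ((Bᴴ * B) k k).re := fun k => by rw [← hdiag]; positivity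
  have hle1 : ∀ k, ‖v k‖ ≤ 1 := by
    intro k
    have htr : ∑ k, ((Bᴴ * B) k k).re = 1 := by
      have := h.2
      rw [Matrix.trace] at this
      have := congrArg Complex.re this
      simpa [Matrix.diag, Complex.re_sum] using this
    have : ((Bᴴ * B) k k).re ≤ 1 := by
      rw [← htr]
      exact Finset.single_le_sum (fun k _ => hdnn k) (Finset.mem_univ k)
    nlinarith [hdiag k, norm_nonneg (v k)]
  calc ‖(Bᴴ * B) i j‖ = ‖(inner ℂ (v i) (v j) : ℂ)‖ := by rw [hinner]
    _ ≤ ‖v i‖ * ‖v j‖ := norm_inner_le_norm _ _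
    _ ≤ 1 * 1 := mul_le_mul (hle1 i) (hle1 j) (norm_nonneg _) zero_le_one
    _ = 1 := mul_one 1

/-- `Nqc` as a linear map. -/
def NqcL (X : Type*) [Fintype X] [DecidableEq X] :
    Matrix X X ℂ →ₗ[ℂ] Matrix X X ℂ where
  toFun := Nqc
  map_add' M M' := by
    ext i j
    by_cases h : i = j <;> simp [Nqc, Matrix.diagonal_apply, h]
  map_smul' c M := by
    ext i j
    by_cases h : i = j <;> simp [Nqc, Matrix.diagonal_apply, h]

/-- `ptraceA` as a linear map. -/
def ptraceAL (X A : Type*) [Fintype X] [Fintype A] :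
    Matrix (X × A) (X × A) ℂ →ₗ[ℂ] Matrix X X ℂ where
  toFun := ptraceA
  map_add' M M' := by
    ext i j
    simp [ptraceA, Finset.sum_add_distrib]
  map_smul' c M := by
    ext i j
    simp [ptraceA, Finset.mul_sum]

/-- Channel application as a linear map. -/
def KrausChannel.applyL (C : KrausChannel d₁ d₂) :
    Matrix d₁ d₁ ℂ →ₗ[ℂ] Matrix d₂ d₂ ℂ where
  toFun := C.apply
  map_add' M M' := by
    simp [KrausChannel.apply, Matrix.mul_add, Matrix.add_mul, Finset.sum_add_distrib]
  map_smul' c M := by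
    simp [KrausChannel.apply, Matrix.mul_smul, Matrix.smul_mul, Finset.smul_sum]

end Aux

/-- For a classical-state-preserving closed-loop policy, the
occupation operator `σ = (1−β)∑ β^t σ_t` satisfies
`N_qc(Tr_A σ) − β N_qc(N σ) = (1−β) N_qc(ρ₀)`. -/
theorem occupation_constraint_closed_loop {X A : Type*}
    [Fintype X] [DecidableEq X] [Fintype A] [DecidableEq A]
    (N : KrausChannel (X × A) X) (β : ℝ) (hβ0 : 0 ≤ β) (hβ1 : β < 1)
    (ρ0 : Matrix X X ℂ) (hρ0 : IsDensity ρ0)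
    (γ : ℕ → KrausChannel X (X × A))
    (hγ : ∀ (t : ℕ) (ρ : Matrix X X ℂ), Nqc (ptraceA ((γ t).apply ρ)) = Nqc ρ)
    (σ : Matrix (X × A) (X × A) ℂ)
    (hσ : σ = (1 - β) •
      ∑' t : ℕ, β ^ t • (γ t).apply (stateSeqW N γ ρ0 t)) :
    Nqc (ptraceA σ) - β • Nqc (N.apply σ) = (1 - β) • Nqc ρ0 := by
  classical
  set ρt : ℕ → Matrix X X ℂ := stateSeqW N γ ρ0 with hρt
  set σt : ℕ → Matrix (X × A) (X × A) ℂ := fun t => (γ t).apply (ρt t) with hσt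
  -- densities
  have hdens : ∀ t, IsDensity (ρt t) := by
    intro t
    induction t with
    | zero => exact hρ0
    | succ t ih => exact N.isDensity_apply ((γ t).isDensity_apply ih)
  have hσdens : ∀ t, IsDensity (σt t) := fun t => (γ t).isDensity_apply (hdens t)
  -- summability
  have hsum : Summable (fun t : ℕ => β ^ t • σt t) := by
    refine Pi.summable.mpr ?_
    intro i
    rw [Pi.summable]
    intro j
    apply Summable.of_norm_bounded (summable_geometric_of_lt_one hβ0 hβ1)
    intro t
    have : ‖(β ^ t • σt t) i j‖ = β ^ t * ‖σt t i j‖ := by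
      show ‖β ^ t • σt t i j‖ = _
      rw [norm_smul, Real.norm_eq_abs, abs_of_nonneg (pow_nonneg hβ0 t)]
    rw [this]
    calc β ^ t * ‖σt t i j‖ ≤ β ^ t * 1 :=
          mul_le_mul_of_nonneg_left ((hσdens t).entry_norm_le_one i j) (pow_nonneg hβ0 t)
      _ = β ^ t := mul_one _
  -- the linear map L
  set L : Matrix (X × A) (X × A) ℂ →ₗ[ℂ] Matrix X X ℂ :=
    (NqcL X).comp (ptraceAL X A) - (β : ℂ) • ((NqcL X).comp N.applyL) with hL
  have hLapp : ∀ M, L M = Nqc (ptraceA M) - β • Nqc (N.apply M) := by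
    intro M
    simp only [hL, LinearMap.sub_apply, LinearMap.smul_apply, LinearMap.comp_apply]
    show Nqc (ptraceA M) - (β : ℂ) • Nqc (N.apply M) = _
    congr 1
  have hLcont : Continuous L := L.continuous_of_finiteDimensional
  have hLtsum : L σ = (1 - β) • ∑' t : ℕ, L (β ^ t • σt t) := by
    rw [hσ, L.map_smul_of_tower]
    congr 1
    exact ((hsum.hasSum.map L.toAddMonoidHom hLcont).tsum_eq).symm
  -- identify L (β^t • σt t)
  set g : ℕ → Matrix X X ℂ := fun t => β ^ t • Nqc (ρt t) with hg
  have hLterm : ∀ t, L (β ^ t • σt t) = g t - g (t + 1) := by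
    intro t
    rw [L.map_smul_of_tower, hLapp]
    have h1 : Nqc (ptraceA (σt t)) = Nqc (ρt t) := hγ t (ρt t)
    have h2 : Nqc (N.apply (σt t)) = Nqc (ρt (t + 1)) := by
      simp [hρt, hσt, stateSeqW]
    rw [h1, h2, hg, smul_sub, smul_smul, ← pow_succ]
  -- summability of g and g ∘ succ
  have hgsum : Summable g := by
    have : g = fun t => ((NqcL X).comp (ptraceAL X A)) (β ^ t • σt t) := by
      funext t
      simp only [LinearMap.comp_apply]
      have : ptraceAL X A (β ^ t • σt t) = β ^ t • ptraceA (σt t) :=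
        (ptraceAL X A).map_smul_of_tower _ _
      rw [this, (NqcL X).map_smul_of_tower]
      show g t = β ^ t • Nqc (ptraceA (σt t))
      rw [hγ t (ρt t)]
    rw [this]
    exact hsum.map _ ((NqcL X).comp (ptraceAL X A)).continuous_of_finiteDimensional
  have hgsum' : Summable (fun t => g (t + 1)) := by
    have : (fun t => g (t + 1)) = fun t => (β • ((NqcL X).comp N.applyL)) (β ^ t • σt t) := by
      funext t
      simp only [LinearMap.smul_apply, LinearMap.comp_apply]
      have h2 : N.applyL (β ^ t • σt t) = β ^ t • N.apply (σt t) :=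
        N.applyL.map_smul_of_tower _ _
      rw [h2, (NqcL X).map_smul_of_tower]
      have h3 : (NqcL X) (N.apply (σt t)) = Nqc (ρt (t + 1)) := by
        simp [NqcL, hρt, hσt, stateSeqW]
      rw [h3, hg]
      show β ^ (t + 1) • Nqc (ρt (t + 1)) = β • β ^ t • Nqc (ρt (t + 1))
      rw [smul_smul, pow_succ, mul_comm]
    rw [this]
    exact hsum.map _ (β • ((NqcL X).comp N.applyL)).continuous_of_finiteDimensional
  -- telescoping
  have htel : ∑' t : ℕ, (g t - g (t + 1)) = g 0 := by
    rw [Summable.tsum_sub hgsum hgsum', Summable.tsum_eq_zero_add hgsum]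
    abel
  have : L σ = (1 - β) • g 0 := by
    rw [hLtsum]
    congr 1
    rw [tsum_congr hLterm, htel]
  rw [hLapp] at this
  simpa [hg, hρt, stateSeqW] using this
end
end

section
/- Suppose ξ is a Hermitian operator on H_X satisfying the feasibility condition c + β N†(N_qc(ξ)) ⪰ N_qc(ξ) ⊗ Id (Löwner order). Then for every quantum channel γ with N_qc ∘ Tr_A ∘ γ = N_qc on D(H_X) and every density operator ρ, one has ⟨c + β N†(N_qc(ξ)), γ(ρ)⟩ ≥ ⟨N_qc(ξ), ρ⟩. -/
open Matrix
open scoped Kronecker ComplexOrder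

noncomputable section

/-- The adjoint (dual) of a Kraus channel. -/
def adjChannel {d₁ d₂ : Type*} [Fintype d₁] [DecidableEq d₁] [Fintype d₂]
    (C : KrausChannel d₁ d₂) (η : Matrix d₂ d₂ ℂ) : Matrix d₁ d₁ ℂ :=
  ∑ l : C.ι, (C.K l)ᴴ * η * C.K l

-- auxiliary lemmas

private lemma psd_trace_re_nonneg {n : Type*} [Fintype n] [DecidableEq n] {M : Matrix n n ℂ}
    (h : M.PosSemidef) : 0 ≤ M.trace.re := by
  rw [Matrix.trace, Complex.re_sum]
  refine Finset.sum_nonneg fun i _ => ?_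
  have h0 : (0 : ℂ) ≤ M i i := by
    exact h.diag_nonneg
  exact (Complex.le_def.mp h0).1

open scoped MatrixOrder in
private lemma trace_mul_psd_re_nonneg {n : Type*} [Fintype n] [DecidableEq n]
    {D P : Matrix n n ℂ} (hD : D.PosSemidef) (hP : P.PosSemidef) :
    0 ≤ (D * P).trace.re := by
  have hS : 0 ≤ CFC.sqrt P := CFC.sqrt_nonneg P
  have key : (CFC.sqrt P * D * (CFC.sqrt P)ᴴ).trace = (D * P).trace := by
    rw [hS.posSemidef.1, Matrix.trace_mul_cycle,
      CFC.sqrt_mul_sqrt_self P hP.nonneg, Matrix.trace_mul_comm]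
  rw [← key]
  exact psd_trace_re_nonneg (hD.mul_mul_conjTranspose_same _)

private lemma apply_posSemidef {d₁ d₂ : Type*} [Fintype d₁] [DecidableEq d₁] [Fintype d₂]
    (C : KrausChannel d₁ d₂) {σ : Matrix d₁ d₁ ℂ} (hσ : σ.PosSemidef) :
    (C.apply σ).PosSemidef := by
  unfold KrausChannel.apply
  refine Finset.sum_induction _ _ (fun a b ha hb => ha.add hb) Matrix.PosSemidef.zero ?_
  intro l _
  exact hσ.mul_mul_conjTranspose_same _

private lemma trace_kron_one_mul {X A : Type*} [Fintype X] [DecidableEq X]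
    [Fintype A] [DecidableEq A] (B : Matrix X X ℂ) (M : Matrix (X × A) (X × A) ℂ) :
    ((B ⊗ₖ (1 : Matrix A A ℂ)) * M).trace = (B * ptraceA M).trace := by
  simp only [Matrix.trace, Matrix.diag, Matrix.mul_apply, ptraceA, Matrix.of_apply,
    Matrix.kroneckerMap_apply, Matrix.one_apply, Fintype.sum_prod_type,
    ite_mul, mul_ite, mul_zero, mul_one, zero_mul, Finset.sum_ite_eq', Finset.sum_ite_eq,
    Finset.mem_univ, if_true, Finset.mul_sum]
  exact Finset.sum_congr rfl fun x _ => Finset.sum_comm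

private lemma trace_nqc_mul {X : Type*} [Fintype X] [DecidableEq X]
    (ξ S : Matrix X X ℂ) : (Nqc ξ * S).trace = (Nqc ξ * Nqc S).trace := by
  simp [Matrix.trace, Matrix.diag, Matrix.mul_apply, Nqc, Matrix.diagonal_apply, ite_mul,
    Finset.sum_ite_eq]

/-- If Hermitian `ξ` satisfies the Löwner-order feasibility
condition `c + β N†(N_qc ξ) ⪰ N_qc(ξ) ⊗ Id`, then for every channel `γ` with
`N_qc ∘ Tr_A ∘ γ = N_qc` on densities and every density `ρ`,
`⟨c + β N†(N_qc ξ), γ(ρ)⟩ ≥ ⟨N_qc ξ, ρ⟩`. -/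
theorem feasibility_lower_bound {X A : Type*}
    [Fintype X] [DecidableEq X] [Fintype A] [DecidableEq A]
    (c : Matrix (X × A) (X × A) ℂ) (hc : c.IsHermitian)
    (N : KrausChannel (X × A) X) (β : ℝ) (hβ0 : 0 ≤ β) (hβ1 : β < 1)
    (ξ : Matrix X X ℂ) (hξ : ξ.IsHermitian)
    (hfeas : (c + β • adjChannel N (Nqc ξ)
        - (Nqc ξ) ⊗ₖ (1 : Matrix A A ℂ)).PosSemidef) :
    ∀ γ : KrausChannel X (X × A),
      (∀ ρ : Matrix X X ℂ, IsDensity ρ → Nqc (ptraceA (γ.apply ρ)) = Nqc ρ) →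
      ∀ ρ : Matrix X X ℂ, IsDensity ρ →
        ((Nqc ξ * ρ).trace.re) ≤
          (((c + β • adjChannel N (Nqc ξ)) * γ.apply ρ).trace.re) := by
  intro γ hγ ρ hρ
  set M := c + β • adjChannel N (Nqc ξ) - Nqc ξ ⊗ₖ (1 : Matrix A A ℂ) with hM
  have hγρ : (γ.apply ρ).PosSemidef := apply_posSemidef γ hρ.1
  have h1 : 0 ≤ (M * γ.apply ρ).trace.re := trace_mul_psd_re_nonneg hfeas hγρ
  have hsplit : (c + β • adjChannel N (Nqc ξ)) * γ.apply ρ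
      = M * γ.apply ρ + (Nqc ξ ⊗ₖ (1 : Matrix A A ℂ)) * γ.apply ρ := by
    rw [hM, Matrix.sub_mul, sub_add_cancel]
  have h2 : ((Nqc ξ ⊗ₖ (1 : Matrix A A ℂ)) * γ.apply ρ).trace = (Nqc ξ * ρ).trace := by
    rw [trace_kron_one_mul, trace_nqc_mul ξ (ptraceA (γ.apply ρ)), hγ ρ hρ,
      ← trace_nqc_mul ξ ρ]
  rw [hsplit, Matrix.trace_add, Complex.add_re, h2]
  linarith
end
end
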